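/- For every g ∈ SL₂(ℝ) and every x ∈ ℝ with g·x ≠ ∞ (i.e. cx + d ≠ 0), there exists a piecewise-projective homeomorphism h of ℝ which coincides with the projective action of g on a neighbourhood of x. Moreover, h can be taken in H(A) whenever A < ℝ is a unital subring containing the coefficients of g. -/

import Mathlib

open Matrix Filter Topology MeasureTheory

noncomputable section

/-- The group of homeomorphisms of a topological space, under composition. -/
instance Homeomorph.instGroupPP {X : Type*} [TopologicalSpace X] : Group (X ≃ₜ X) where
  mul a b := b.trans a
  one := Homeomorph.refl X
  inv := Homeomorph.symm
  mul_assoc a b c := Homeomorph.ext fun _ => rfl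
  one_mul a := Homeomorph.ext fun _ => rfl
  mul_one a := Homeomorph.ext fun _ => rfl
  inv_mul_cancel a := Homeomorph.ext fun x => a.symm_apply_apply x

@[simp] lemma Homeomorph.mul_apply' {X : Type*} [TopologicalSpace X]
    (a b : X ≃ₜ X) (x : X) : (a * b) x = a (b x) := rfl

@[simp] lemma Homeomorph.inv_coe {X : Type*} [TopologicalSpace X]
    (a : X ≃ₜ X) : (a⁻¹ : X ≃ₜ X) = a.symm := rfl

abbrev SL2 (R : Type*) [CommRing R] := Matrix.SpecialLinearGroup (Fin 2) R

namespace PP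

/-- Denominator of the Möbius transformation attached to `g`. -/
def mdenom (g : SL2 ℝ) (x : ℝ) : ℝ := g.1 1 0 * x + g.1 1 1

/-- The Möbius transformation attached to `g`. -/
def moebius (g : SL2 ℝ) (x : ℝ) : ℝ := (g.1 0 0 * x + g.1 0 1) / (g.1 1 0 * x + g.1 1 1)

/-- `g` is a local (projective) piece of the homeomorphism `h` at the point `x`. -/
def IsLocalPiece (h : ℝ ≃ₜ ℝ) (g : SL2 ℝ) (x : ℝ) : Prop :=
  mdenom g x ≠ 0 ∧ ∀ᶠ y in 𝓝 x, h y = moebius g y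

/-- `h` is piecewise given by Möbius transformations of matrices in `M`:
outside of a finite set of breakpoints, `h` is locally a Möbius map from `M`. -/
def IsPiecewiseIn (M : Set (SL2 ℝ)) (h : ℝ ≃ₜ ℝ) : Prop :=
  ∃ B : Finset ℝ, ∀ x ∉ B, ∃ g ∈ M, IsLocalPiece h g x

/-- A breakpoint of `h` : a point where `h` is not locally projective. -/
def IsBreakpoint (h : ℝ ≃ₜ ℝ) (x : ℝ) : Prop := ¬ ∃ g : SL2 ℝ, IsLocalPiece h g x

/-- Matrices with entries in the subring `A`. -/
def entriesIn (A : Subring ℝ) : Set (SL2 ℝ) := {g | ∀ i j, g.1 i j ∈ A}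

lemma one_entriesIn (A : Subring ℝ) : (1 : SL2 ℝ) ∈ entriesIn A := by
  intro i j
  by_cases h : i = j <;>
    simp [entriesIn, Matrix.SpecialLinearGroup.coe_one, Matrix.one_apply, h, A.one_mem, A.zero_mem]

lemma mul_entriesIn {A : Subring ℝ} {g₁ g₂ : SL2 ℝ} (h₁ : g₁ ∈ entriesIn A)
    (h₂ : g₂ ∈ entriesIn A) : g₁ * g₂ ∈ entriesIn A := by
  intro i j
  rw [Matrix.SpecialLinearGroup.coe_mul, Matrix.mul_apply]
  exact Subring.sum_mem A fun k _ => A.mul_mem (h₁ i k) (h₂ k j)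

lemma inv_entriesIn {A : Subring ℝ} {g : SL2 ℝ} (h : g ∈ entriesIn A) :
    g⁻¹ ∈ entriesIn A := by
  intro i j
  have : (g⁻¹ : SL2 ℝ).1 = (g.1).adjugate := Matrix.SpecialLinearGroup.coe_inv g
  rw [this, Matrix.adjugate_fin_two]
  fin_cases i <;> fin_cases j <;>
    simp [Matrix.cons_val_zero, Matrix.cons_val_one] <;>
    first
      | exact h 1 1
      | exact h 0 1
      | exact h 1 0
      | exact A.neg_mem (h 0 1)
      | exact A.neg_mem (h 1 0)
      | exact h 0 0

lemma det_eq (g : SL2 ℝ) : g.1 0 0 * g.1 1 1 - g.1 0 1 * g.1 1 0 = 1 := by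
  have := g.2
  rwa [Matrix.det_fin_two] at this

/-- Composition of Möbius transformations (denominator part). -/
lemma mdenom_mul (g₁ g₂ : SL2 ℝ) (x : ℝ) (h₂ : mdenom g₂ x ≠ 0) :
    mdenom (g₁ * g₂) x = mdenom g₁ (moebius g₂ x) * mdenom g₂ x := by
  unfold mdenom moebius at *
  rw [Matrix.SpecialLinearGroup.coe_mul, Matrix.mul_apply, Matrix.mul_apply, Fin.sum_univ_two,
    Fin.sum_univ_two]
  field_simp
  ring

lemma mdenom_mul_ne (g₁ g₂ : SL2 ℝ) (x : ℝ) (h₂ : mdenom g₂ x ≠ 0)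
    (h₁ : mdenom g₁ (moebius g₂ x) ≠ 0) : mdenom (g₁ * g₂) x ≠ 0 := by
  rw [mdenom_mul g₁ g₂ x h₂]; exact mul_ne_zero h₁ h₂

lemma moebius_mul (g₁ g₂ : SL2 ℝ) (x : ℝ) (h₂ : mdenom g₂ x ≠ 0)
    (h₁ : mdenom g₁ (moebius g₂ x) ≠ 0) :
    moebius (g₁ * g₂) x = moebius g₁ (moebius g₂ x) := by
  have hden := mdenom_mul_ne g₁ g₂ x h₂ h₁
  unfold mdenom moebius at *
  simp only [Matrix.SpecialLinearGroup.coe_mul, Matrix.mul_apply, Fin.sum_univ_two] at *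
  rw [div_eq_div_iff hden h₁]
  field_simp
  ring

lemma inv_entry_00 (g : SL2 ℝ) : (g⁻¹ : SL2 ℝ).1 0 0 = g.1 1 1 := by
  simp [Matrix.SpecialLinearGroup.coe_inv, Matrix.adjugate_fin_two]
lemma inv_entry_01 (g : SL2 ℝ) : (g⁻¹ : SL2 ℝ).1 0 1 = -g.1 0 1 := by
  simp [Matrix.SpecialLinearGroup.coe_inv, Matrix.adjugate_fin_two]
lemma inv_entry_10 (g : SL2 ℝ) : (g⁻¹ : SL2 ℝ).1 1 0 = -g.1 1 0 := by
  simp [Matrix.SpecialLinearGroup.coe_inv, Matrix.adjugate_fin_two]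
lemma inv_entry_11 (g : SL2 ℝ) : (g⁻¹ : SL2 ℝ).1 1 1 = g.1 0 0 := by
  simp [Matrix.SpecialLinearGroup.coe_inv, Matrix.adjugate_fin_two]

lemma moebius_one (x : ℝ) : moebius 1 x = x := by
  unfold moebius
  simp [Matrix.SpecialLinearGroup.coe_one, Matrix.one_apply]

lemma mdenom_one (x : ℝ) : mdenom 1 x = 1 := by
  unfold mdenom
  simp [Matrix.SpecialLinearGroup.coe_one, Matrix.one_apply]

lemma mdenom_inv (g : SL2 ℝ) (x : ℝ) (h : mdenom g x ≠ 0) :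
    mdenom g⁻¹ (moebius g x) = 1 / mdenom g x := by
  have hdet := det_eq g
  unfold mdenom moebius at *
  rw [inv_entry_10, inv_entry_11]
  field_simp
  linear_combination hdet

lemma moebius_inv (g : SL2 ℝ) (x : ℝ) (h : mdenom g x ≠ 0) :
    mdenom g⁻¹ (moebius g x) ≠ 0 ∧ moebius g⁻¹ (moebius g x) = x := by
  have h1 : mdenom g⁻¹ (moebius g x) = 1 / mdenom g x := mdenom_inv g x h
  have hne : mdenom g⁻¹ (moebius g x) ≠ 0 := by rw [h1]; exact one_div_ne_zero h
  refine ⟨hne, ?_⟩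
  rw [← moebius_mul g⁻¹ g x h hne, inv_mul_cancel, moebius_one]

lemma mdenom_continuous (g : SL2 ℝ) : Continuous (mdenom g) := by
  unfold mdenom; fun_prop

lemma eventually_mdenom_ne (g : SL2 ℝ) {x : ℝ} (h : mdenom g x ≠ 0) :
    ∀ᶠ y in 𝓝 x, mdenom g y ≠ 0 :=
  (mdenom_continuous g).continuousAt.eventually_ne h

lemma IsLocalPiece.mul {a b : ℝ ≃ₜ ℝ} {g₁ g₂ : SL2 ℝ} {x : ℝ}
    (h₁ : IsLocalPiece a g₁ (b x)) (h₂ : IsLocalPiece b g₂ x) :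
    IsLocalPiece (a * b) (g₁ * g₂) x := by
  obtain ⟨d₂, e₂⟩ := h₂
  obtain ⟨d₁, e₁⟩ := h₁
  have hbx : b x = moebius g₂ x := e₂.self_of_nhds
  have d₁' : mdenom g₁ (moebius g₂ x) ≠ 0 := hbx ▸ d₁
  refine ⟨mdenom_mul_ne g₁ g₂ x d₂ d₁', ?_⟩
  have hmap : ∀ᶠ y in 𝓝 x, a (b y) = moebius g₁ (b y) := by
    have hb : Filter.map b (𝓝 x) = 𝓝 (b x) := b.map_nhds_eq x
    rw [← hb] at e₁
    exact e₁
  have hd1ev : ∀ᶠ y in 𝓝 x, mdenom g₁ (b y) ≠ 0 := by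
    have hb : Filter.map b (𝓝 x) = 𝓝 (b x) := b.map_nhds_eq x
    have := eventually_mdenom_ne g₁ d₁
    rw [← hb] at this
    exact this
  filter_upwards [e₂, hmap, hd1ev, eventually_mdenom_ne g₂ d₂] with y hy₂ hy₁ hyd₁ hyd₂
  have hyd₁' : mdenom g₁ (moebius g₂ y) ≠ 0 := by rw [← hy₂]; exact hyd₁
  calc (a * b) y = a (b y) := rfl
    _ = moebius g₁ (b y) := hy₁
    _ = moebius g₁ (moebius g₂ y) := by rw [hy₂]
    _ = moebius (g₁ * g₂) y := (moebius_mul g₁ g₂ y hyd₂ hyd₁').symm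

lemma IsLocalPiece.inv {h : ℝ ≃ₜ ℝ} {g : SL2 ℝ} {x : ℝ} (hp : IsLocalPiece h g x) :
    IsLocalPiece h⁻¹ g⁻¹ (h x) := by
  obtain ⟨d, e⟩ := hp
  have hx : h x = moebius g x := e.self_of_nhds
  refine ⟨by rw [hx]; exact (moebius_inv g x d).1, ?_⟩
  have hb : Filter.map h (𝓝 x) = 𝓝 (h x) := h.map_nhds_eq x
  rw [← hb, Filter.eventually_map]
  filter_upwards [e, eventually_mdenom_ne g d] with y hy hyd
  calc (h⁻¹ : ℝ ≃ₜ ℝ) (h y) = y := h.symm_apply_apply y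
    _ = moebius g⁻¹ (h y) := by rw [hy]; exact ((moebius_inv g y hyd).2).symm

lemma isLocalPiece_one (x : ℝ) : IsLocalPiece 1 1 x := by
  refine ⟨by rw [mdenom_one]; exact one_ne_zero, ?_⟩
  filter_upwards with y
  rw [moebius_one]
  rfl

/-- The group of piecewise-`SL₂(A)` homeomorphisms of the real line. -/
def PW (A : Subring ℝ) : Subgroup (ℝ ≃ₜ ℝ) where
  carrier := {h | IsPiecewiseIn (entriesIn A) h}
  one_mem' := ⟨∅, fun x _ => ⟨1, one_entriesIn A, isLocalPiece_one x⟩⟩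
  mul_mem' := by
    rintro a b ⟨Ba, hBa⟩ ⟨Bb, hBb⟩
    refine ⟨Bb ∪ Ba.image b.symm, fun x hx => ?_⟩
    rw [Finset.mem_union, not_or] at hx
    obtain ⟨hxb, hxa⟩ := hx
    obtain ⟨g₂, hg₂A, hg₂⟩ := hBb x hxb
    have hbx : b x ∉ Ba := by
      intro hmem
      exact hxa (Finset.mem_image.2 ⟨b x, hmem, b.symm_apply_apply x⟩)
    obtain ⟨g₁, hg₁A, hg₁⟩ := hBa (b x) hbx
    exact ⟨g₁ * g₂, mul_entriesIn hg₁A hg₂A, hg₁.mul hg₂⟩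
  inv_mem' := by
    rintro h ⟨B, hB⟩
    refine ⟨B.image h, fun y hy => ?_⟩
    have hxB : h.symm y ∉ B := by
      intro hmem
      exact hy (Finset.mem_image.2 ⟨h.symm y, hmem, h.apply_symm_apply y⟩)
    obtain ⟨g, hgA, hg⟩ := hB (h.symm y) hxB
    have := hg.inv
    rw [h.apply_symm_apply y] at this
    exact ⟨g⁻¹, inv_entriesIn hgA, this⟩

/-- Real fixed points of hyperbolic elements of `SL₂(A)`. -/
def FixHyp (A : Subring ℝ) : Set ℝ :=
  {x | ∃ g : SL2 ℝ, g ∈ entriesIn A ∧ |Matrix.trace g.1| > 2 ∧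
        mdenom g x ≠ 0 ∧ moebius g x = x}

lemma trace_conj (g q : SL2 ℝ) :
    Matrix.trace ((g⁻¹ * q * g : SL2 ℝ) : Matrix (Fin 2) (Fin 2) ℝ) = Matrix.trace q.1 := by
  rw [Matrix.SpecialLinearGroup.coe_mul, Matrix.SpecialLinearGroup.coe_mul,
    Matrix.trace_mul_comm, ← Matrix.mul_assoc, ← Matrix.SpecialLinearGroup.coe_mul,
    mul_inv_cancel, Matrix.SpecialLinearGroup.coe_one, Matrix.one_mul]

lemma FixHyp.conj {A : Subring ℝ} {g : SL2 ℝ} {x : ℝ} (hgA : g ∈ entriesIn A)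
    (hd : mdenom g x ≠ 0) (hfix : moebius g x ∈ FixHyp A) : x ∈ FixHyp A := by
  obtain ⟨q, hqA, hqtr, hqd, hqfix⟩ := hfix
  refine ⟨g⁻¹ * q * g, mul_entriesIn (mul_entriesIn (inv_entriesIn hgA) hqA) hgA,
    by rw [trace_conj]; exact hqtr, ?_, ?_⟩
  all_goals
    have hden1 : mdenom (q * g) x ≠ 0 := mdenom_mul_ne q g x hd hqd
    have hmo1 : moebius (q * g) x = moebius g x := by
      rw [moebius_mul q g x hd hqd, hqfix]
    have hden2 : mdenom g⁻¹ (moebius (q * g) x) ≠ 0 := by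
      rw [hmo1]; exact (moebius_inv g x hd).1
  · rw [mul_assoc]
    exact mdenom_mul_ne g⁻¹ (q * g) x hden1 hden2
  · rw [mul_assoc, moebius_mul g⁻¹ (q * g) x hden1 hden2, hmo1]
    exact (moebius_inv g x hd).2

/-- `h` is locally an `SL₂(A)`-Möbius map away from the set `Φ`. -/
def LocallyIn (A : Subring ℝ) (Φ : Set ℝ) (h : ℝ ≃ₜ ℝ) : Prop :=
  ∀ x : ℝ, x ∉ Φ → ∃ g ∈ entriesIn A, IsLocalPiece h g x

/-- The complement of `Φ` is invariant under Möbius maps with entries in `A`. -/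
def MoebiusInv (A : Subring ℝ) (Φ : Set ℝ) : Prop :=
  ∀ g ∈ entriesIn A, ∀ x : ℝ, mdenom g x ≠ 0 → x ∉ Φ → moebius g x ∉ Φ

lemma LocallyIn.mul {A : Subring ℝ} {Φ : Set ℝ} (hΦ : MoebiusInv A Φ) {a b : ℝ ≃ₜ ℝ}
    (ha : LocallyIn A Φ a) (hb : LocallyIn A Φ b) : LocallyIn A Φ (a * b) := by
  intro x hx
  obtain ⟨g₂, hg₂A, hg₂⟩ := hb x hx
  have hbx : b x ∉ Φ := by
    have : b x = moebius g₂ x := hg₂.2.self_of_nhds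
    rw [this]
    exact hΦ g₂ hg₂A x hg₂.1 hx
  obtain ⟨g₁, hg₁A, hg₁⟩ := ha (b x) hbx
  exact ⟨g₁ * g₂, mul_entriesIn hg₁A hg₂A, hg₁.mul hg₂⟩

/-- The group of piecewise-`SL₂(A)` homeomorphisms of the line all of whose
breakpoints lie in the set `Φ`. -/
def BreakIn (A : Subring ℝ) (Φ : Set ℝ) (hΦ : MoebiusInv A Φ) : Subgroup (ℝ ≃ₜ ℝ) where
  carrier := {h | IsPiecewiseIn (entriesIn A) h ∧ LocallyIn A Φ h ∧ LocallyIn A Φ h⁻¹}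
  one_mem' := by
    refine ⟨(PW A).one_mem', ?_, ?_⟩ <;>
      · intro x _
        exact ⟨1, one_entriesIn A, isLocalPiece_one x⟩
  mul_mem' := by
    rintro a b ⟨hapw, ha, ha'⟩ ⟨hbpw, hb, hb'⟩
    refine ⟨(PW A).mul_mem' hapw hbpw, LocallyIn.mul hΦ ha hb, ?_⟩
    rw [_root_.mul_inv_rev]
    exact LocallyIn.mul hΦ hb' ha'
  inv_mem' := by
    rintro h ⟨hpw, h₁, h₂⟩
    refine ⟨(PW A).inv_mem' hpw, h₂, ?_⟩
    rw [inv_inv]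
    exact h₁

lemma fixHyp_moebiusInv (A : Subring ℝ) : MoebiusInv A (FixHyp A) :=
  fun g hg x hd hx hmem => hx (FixHyp.conj hg hd hmem)

/-- The group `H(A)`: piecewise-`SL₂(A)` homeomorphisms of the line whose
breakpoints are fixed points of hyperbolic elements of `SL₂(A)`. -/
def HGroup (A : Subring ℝ) : Subgroup (ℝ ≃ₜ ℝ) := BreakIn A (FixHyp A) (fixHyp_moebiusInv A)

/-- The ring `ℤ[1/S]` of `S`-integers, as a subring of `ℚ`. -/
def SIntQ (S : Set ℕ) : Subring ℚ := Subring.closure {x : ℚ | ∃ p ∈ S, x = (p : ℚ)⁻¹}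

/-- The ring `ℤ[1/S]` of `S`-integers, as a subring of `ℝ`. -/
def SIntR (S : Set ℕ) : Subring ℝ := Subring.closure {x : ℝ | ∃ p ∈ S, x = (p : ℝ)⁻¹}

/-- The group `Γ_S` of piecewise-`SL₂(ℤ[1/S])` homeomorphisms of the line. -/
def Gamma (S : Set ℕ) : Subgroup (ℝ ≃ₜ ℝ) := PW (SIntR S)

/-- `ℚ` as a subring of `ℝ`. -/
def ratSubring : Subring ℝ := (Rat.castHom ℝ).range

/-- `ℤ` as a subring of `ℝ`. -/
def intSubring : Subring ℝ := (Int.castRingHom ℝ).range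

/-- The group `H(ℚ)` of piecewise-`SL₂(ℚ)` homeomorphisms of the line. -/
def HQ : Subgroup (ℝ ≃ₜ ℝ) := PW ratSubring

lemma ratSubring_div_mem {x y : ℝ} (hx : x ∈ ratSubring) (hy : y ∈ ratSubring) :
    x / y ∈ ratSubring := by
  obtain ⟨q, rfl⟩ := RingHom.mem_range.1 hx
  obtain ⟨r, rfl⟩ := RingHom.mem_range.1 hy
  refine RingHom.mem_range.2 ⟨q / r, ?_⟩
  simp [Rat.cast_div]

lemma moebius_mem_rat {g : SL2 ℝ} (hg : g ∈ entriesIn ratSubring) {y : ℝ}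
    (hy : y ∈ ratSubring) : moebius g y ∈ ratSubring := by
  unfold moebius
  exact ratSubring_div_mem
    (ratSubring.add_mem (ratSubring.mul_mem (hg 0 0) hy) (hg 0 1))
    (ratSubring.add_mem (ratSubring.mul_mem (hg 1 0) hy) (hg 1 1))

lemma rat_moebiusInv {A : Subring ℝ} (hA : A ≤ ratSubring) :
    MoebiusInv A (ratSubring : Set ℝ) := by
  intro g hg x hd hx hmem
  apply hx
  have : moebius g⁻¹ (moebius g x) = x := (moebius_inv g x hd).2
  rw [← this]
  exact moebius_mem_rat (fun i j => hA (inv_entriesIn hg i j)) hmem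

lemma intSubring_le_rat : intSubring ≤ ratSubring := by
  rintro x ⟨n, rfl⟩
  refine RingHom.mem_range.2 ⟨(n : ℚ), ?_⟩
  simp

/-- Thompson's group `F` realized as `H_ℚ(ℤ)`: piecewise-`SL₂(ℤ)` homeomorphisms
of the line with rational breakpoints. -/
def Thompson : Subgroup (ℝ ≃ₜ ℝ) :=
  BreakIn intSubring (ratSubring : Set ℝ) (rat_moebiusInv intSubring_le_rat)

/-- The group `H_ℚ(ℚ)` of piecewise-`SL₂(ℚ)` homeomorphisms of the line with
rational breakpoints. -/
def HQrat : Subgroup (ℝ ≃ₜ ℝ) :=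
  BreakIn ratSubring (ratSubring : Set ℝ) (rat_moebiusInv le_rfl)

/-- A bounded real-valued function. -/
def Bdd {X : Type*} (f : X → ℝ) : Prop := ∃ C, ∀ x, |f x| ≤ C

/-- A mean: a normalized positive linear functional on bounded functions. -/
structure MeanOn (X : Type*) where
  toFun : (X → ℝ) → ℝ
  add' : ∀ f g : X → ℝ, Bdd f → Bdd g → toFun (f + g) = toFun f + toFun g
  smul' : ∀ (c : ℝ) (f : X → ℝ), Bdd f → toFun (c • f) = c * toFun f
  mono' : ∀ f g : X → ℝ, Bdd f → Bdd g → (∀ x, f x ≤ g x) → toFun f ≤ toFun g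
  one' : toFun (fun _ => 1) = 1

/-- A subgroup `H ≤ G` is co-amenable in `G` if there is a `G`-invariant mean on `G/H`. -/
def CoAmenableIn {G : Type*} [Group G] (H : Subgroup G) : Prop :=
  ∃ m : MeanOn (G ⧸ H), ∀ (g : G) (f : (G ⧸ H) → ℝ), Bdd f →
    m.toFun (fun x => f (g • x)) = m.toFun f

end PP

open PP

namespace PP

lemma moebius_eq (g : SL2 ℝ) (y : ℝ) :
    moebius g y = (g.1 0 0 * y + g.1 0 1) / (g.1 1 0 * y + g.1 1 1) := rfl

lemma mdenom_eq (g : SL2 ℝ) (y : ℝ) : mdenom g y = g.1 1 0 * y + g.1 1 1 := rfl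

/-- Build an element of `SL2 ℝ` from four entries. -/
def mk2 (a b c d : ℝ) (h : a * d - b * c = 1) : SL2 ℝ :=
  ⟨!![a, b; c, d], by rw [Matrix.det_fin_two_of]; linarith⟩

@[simp] lemma mk2_coe (a b c d : ℝ) (h : a * d - b * c = 1) :
    (mk2 a b c d h).1 = !![a, b; c, d] := rfl

lemma moebius_mk2 (a b c d : ℝ) (h : a * d - b * c = 1) (y : ℝ) :
    moebius (mk2 a b c d h) y = (a * y + b) / (c * y + d) := by
  simp [moebius, mk2]

lemma mdenom_mk2 (a b c d : ℝ) (h : a * d - b * c = 1) (y : ℝ) :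
    mdenom (mk2 a b c d h) y = c * y + d := by
  simp [mdenom, mk2]

lemma mk2_entriesIn {A : Subring ℝ} {a b c d : ℝ} (h : a * d - b * c = 1)
    (hA : a ∈ A ∧ b ∈ A ∧ c ∈ A ∧ d ∈ A) : mk2 a b c d h ∈ entriesIn A := by
  intro i j
  fin_cases i <;> fin_cases j <;> simp [mk2, entriesIn] <;> tauto

lemma mem_HGroup {A : Subring ℝ} {h : ℝ ≃ₜ ℝ} (h1 : IsPiecewiseIn (entriesIn A) h)
    (h2 : LocallyIn A (FixHyp A) h) (h3 : LocallyIn A (FixHyp A) h⁻¹) : h ∈ HGroup A :=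
  ⟨h1, h2, h3⟩

/-- Homeomorphism of `ℝ` from a strictly monotone surjection. -/
def homeoOfMono (f : ℝ → ℝ) (hm : StrictMono f) (hs : Function.Surjective f) : ℝ ≃ₜ ℝ :=
  (StrictMono.orderIsoOfSurjective f hm hs).toHomeomorph

@[simp] lemma homeoOfMono_apply (f : ℝ → ℝ) (hm : StrictMono f) (hs : Function.Surjective f)
    (y : ℝ) : homeoOfMono f hm hs y = f y := rfl

end PP

namespace PP

set_option maxHeartbeats 1000000 in
lemma key_pos (g : SL2 ℝ) (hcpos : 0 < g.1 1 0) (x : ℝ) (hx : mdenom g x ≠ 0)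
    (A : Subring ℝ) (hA : g ∈ entriesIn A) :
    ∃ h : ℝ ≃ₜ ℝ, h ∈ HGroup A ∧ ∀ᶠ y in 𝓝 x, h y = moebius g y := by
  set a := g.1 0 0 with ha
  set b := g.1 0 1 with hb
  set c := g.1 1 0 with hc0
  set d := g.1 1 1 with hd0
  have hdet : a * d - b * c = 1 := by rw [ha, hb, hc0, hd0]; exact det_eq g
  have hc : c ≠ 0 := ne_of_gt hcpos
  have hMo : ∀ y : ℝ, moebius g y = (a * y + b) / (c * y + d) := by
    intro y; rw [moebius_eq, ha, hb, hc0, hd0]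
  have hMd : ∀ y : ℝ, mdenom g y = c * y + d := by
    intro y; rw [mdenom_eq, hc0, hd0]
  have hw : c * x + d ≠ 0 := by rw [← hMd]; exact hx
  clear_value a b c d
  -- choose an integer t with c*(c*x+d)*(t - (moebius g x - x)) < 0
  obtain ⟨t, ht⟩ : ∃ t : ℤ, c * (c * x + d) * ((t : ℝ) - (moebius g x - x)) < 0 := by
    rcases hw.lt_or_gt with h | h
    · obtain ⟨t, ht⟩ := exists_int_gt (moebius g x - x)
      exact ⟨t, mul_neg_of_neg_of_pos (mul_neg_of_pos_of_neg hcpos h) (by linarith)⟩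
    · obtain ⟨t, ht⟩ := exists_int_lt (moebius g x - x)
      exact ⟨t, mul_neg_of_pos_of_neg (mul_pos hcpos h) (by linarith)⟩
  set β : ℝ := d - a + t * c with hβ
  set D : ℝ := (a + d - t * c) ^ 2 - 4 with hD0
  have hPQ : ∀ y : ℝ, (c * y + β / 2) ^ 2 - D / 4
      = c * (c * y ^ 2 + β * y + ((t : ℝ) * d - b)) := by
    intro y; rw [hβ, hD0]; linear_combination (-1 : ℝ) * hdet
  have hPx : (c * x + β / 2) ^ 2 - D / 4 < 0 := by
    rw [hPQ x]
    have e1 : c * (c * x ^ 2 + β * x + ((t : ℝ) * d - b))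
        = c * (c * x + d) * ((t : ℝ) - (moebius g x - x)) := by
      rw [hMo x, hβ]; field_simp; ring
    rw [e1]; exact ht
  have hD : 0 < D := by nlinarith [sq_nonneg (c * x + β / 2)]
  set r : ℝ := Real.sqrt D / 2 with hrdef
  have hr : 0 < r := by rw [hrdef]; positivity
  have hr2 : r ^ 2 = D / 4 := by
    rw [hrdef, div_pow, Real.sq_sqrt hD.le]; norm_num
  set p₁ : ℝ := (-(β / 2) - r) / c with hp₁
  set p₂ : ℝ := (-(β / 2) + r) / c with hp₂
  have hz1 : c * p₁ + β / 2 = -r := by rw [hp₁]; field_simp; ring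
  have hz2 : c * p₂ + β / 2 = r := by rw [hp₂]; field_simp; ring
  have hp12 : p₁ < p₂ := by
    rw [hp₁, hp₂, div_lt_div_iff_of_pos_right hcpos]  -- may need rename
    linarith
  have hx1 : p₁ < x := by
    rw [hp₁, div_lt_iff₀ hcpos]; nlinarith
  have hx2 : x < p₂ := by
    rw [hp₂, lt_div_iff₀ hcpos]; nlinarith
  clear_value β D r p₁ p₂
  -- P ≤ 0 on [p₁,p₂]
  have hPIcc : ∀ y ∈ Set.Icc p₁ p₂, (c * y + β / 2) ^ 2 - D / 4 ≤ 0 := by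
    intro y hy
    have l1 := mul_le_mul_of_nonneg_left hy.1 hcpos.le
    have l2 := mul_le_mul_of_nonneg_left hy.2 hcpos.le
    have m1 : -r ≤ c * y + β / 2 := by linarith
    have m2 : c * y + β / 2 ≤ r := by linarith
    nlinarith [m1, m2, hr2]
  -- the pole is outside [p₁,p₂]
  have hden : ∀ y ∈ Set.Icc p₁ p₂, c * y + d ≠ 0 := by
    intro y hy h0
    have h1 : (c * y + β / 2) ^ 2 - D / 4 = 1 := by
      rw [hPQ y, hβ]
      linear_combination (c * y + (t : ℝ) * c - a) * h0 + hdet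
    have := hPIcc y hy
    linarith
  -- sign constancy of the denominator on [p₁,p₂]
  set ξ : ℝ := -d / c with hξdef
  have hcyd : ∀ y : ℝ, c * y + d = c * (y - ξ) := by
    intro y; rw [hξdef]; field_simp; ring
  have hξout : ξ < p₁ ∨ p₂ < ξ := by
    by_contra hcon
    push_neg at hcon
    exact hden ξ ⟨hcon.1, hcon.2⟩ (by rw [hcyd ξ]; ring)
  have hsign : ∀ y ∈ Set.Icc p₁ p₂, ∀ y' ∈ Set.Icc p₁ p₂, 0 < (c * y + d) * (c * y' + d) := by
    intro y hy y' hy'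
    rw [hcyd y, hcyd y']
    rcases hξout with h | h
    · exact mul_pos (mul_pos hcpos (by rcases hy with ⟨u,v⟩; linarith))
        (mul_pos hcpos (by rcases hy' with ⟨u,v⟩; linarith))
    · have n1 : c * (y - ξ) < 0 := mul_neg_of_pos_of_neg hcpos (by rcases hy with ⟨u,v⟩; linarith)
      have n2 : c * (y' - ξ) < 0 := mul_neg_of_pos_of_neg hcpos (by rcases hy' with ⟨u,v⟩; linarith)
      exact mul_pos_of_neg_of_neg n1 n2
  -- fixed point equations
  have hQ : ∀ p : ℝ, (c * p + β / 2) ^ 2 - D / 4 = 0 →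
      c * p ^ 2 + β * p + ((t : ℝ) * d - b) = 0 := by
    intro p hp
    have := hPQ p
    rw [hp] at this
    rcases mul_eq_zero.1 this.symm with h | h
    · exact absurd h hc
    · exact h
  have hQ1 : c * p₁ ^ 2 + β * p₁ + ((t : ℝ) * d - b) = 0 := by
    apply hQ; rw [hz1]; nlinarith
  have hQ2 : c * p₂ ^ 2 + β * p₂ + ((t : ℝ) * d - b) = 0 := by
    apply hQ; rw [hz2]; nlinarith
  have hd1 : c * p₁ + d ≠ 0 := hden p₁ ⟨le_rfl, hp12.le⟩
  have hd2 : c * p₂ + d ≠ 0 := hden p₂ ⟨hp12.le, le_rfl⟩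
  have hfix1 : moebius g p₁ = p₁ + t := by
    rw [hMo p₁, div_eq_iff hd1]
    rw [hβ] at hQ1
    linear_combination -hQ1
  have hfix2 : moebius g p₂ = p₂ + t := by
    rw [hMo p₂, div_eq_iff hd2]
    rw [hβ] at hQ2
    linear_combination -hQ2
  -- the hyperbolic element q fixing p₁ and p₂
  have hqdet : (a - t * c) * d - (b - t * d) * c = 1 := by linear_combination hdet
  set q : SL2 ℝ := mk2 (a - t * c) (b - t * d) c d hqdet with hq
  have hqA : q ∈ entriesIn A := by
    rw [hq]
    refine mk2_entriesIn hqdet ⟨A.sub_mem ?_ (A.mul_mem (intCast_mem A t) ?_),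
      A.sub_mem ?_ (A.mul_mem (intCast_mem A t) ?_), ?_, ?_⟩
    · rw [ha]; exact hA 0 0
    · rw [hc0]; exact hA 1 0
    · rw [hb]; exact hA 0 1
    · rw [hd0]; exact hA 1 1
    · rw [hc0]; exact hA 1 0
    · rw [hd0]; exact hA 1 1
  have hqtr : |Matrix.trace (q.1)| > 2 := by
    rw [hq, mk2_coe, Matrix.trace_fin_two_of]
    nlinarith [sq_abs (a - t * c + d), abs_nonneg (a - t * c + d)]
  have hfixq : ∀ p : ℝ, c * p + d ≠ 0 → c * p ^ 2 + β * p + ((t : ℝ) * d - b) = 0 →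
      p ∈ FixHyp A := by
    intro p hdp hQp
    refine ⟨q, hqA, hqtr, ?_, ?_⟩
    · rw [hq, mdenom_mk2]; exact hdp
    · rw [hq, moebius_mk2, div_eq_iff hdp]
      rw [hβ] at hQp
      linear_combination -hQp
  have hp₁Fix : p₁ ∈ FixHyp A := hfixq p₁ hd1 hQ1
  have hp₂Fix : p₂ ∈ FixHyp A := hfixq p₂ hd2 hQ2
  -- the piecewise map
  classical
  set f : ℝ → ℝ := fun y => if p₁ ≤ y ∧ y ≤ p₂ then moebius g y else y + t with hf
  have hfIn : ∀ y : ℝ, p₁ ≤ y → y ≤ p₂ → f y = moebius g y := by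
    intro y h1 h2; rw [hf]; simp only [if_pos (And.intro h1 h2)]
  have hfOut : ∀ y : ℝ, ¬(p₁ ≤ y ∧ y ≤ p₂) → f y = y + t := by
    intro y h1; rw [hf]; simp only [if_neg h1]
  -- monotonicity of the Möbius part
  have hMmono : ∀ y ∈ Set.Icc p₁ p₂, ∀ y' ∈ Set.Icc p₁ p₂, y < y' →
      moebius g y < moebius g y' := by
    intro y hy y' hy' hlt
    have h1 : c * y + d ≠ 0 := hden y hy
    have h2 : c * y' + d ≠ 0 := hden y' hy'
    have hp := hsign y hy y' hy'
    have hnum : (a * y' + b) * (c * y + d) - (c * y' + d) * (a * y + b) = y' - y := by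
      linear_combination (y' - y) * hdet
    have key : moebius g y' - moebius g y = (y' - y) / ((c * y' + d) * (c * y + d)) := by
      rw [hMo y, hMo y', div_sub_div _ _ h2 h1, hnum]
    have hpos : 0 < (y' - y) / ((c * y' + d) * (c * y + d)) :=
      div_pos (by linarith) (by nlinarith [hp])
    linarith [key ▸ hpos]
  have hmono : StrictMono f := by
    intro y y' hlt
    by_cases hy : p₁ ≤ y ∧ y ≤ p₂
    · by_cases hy' : p₁ ≤ y' ∧ y' ≤ p₂
      · rw [hfIn y hy.1 hy.2, hfIn y' hy'.1 hy'.2]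
        exact hMmono y hy y' hy' hlt
      · have hy'2 : p₂ < y' := by
          rcases not_and_or.1 hy' with h | h
          · exact absurd (le_trans hy.1 hlt.le) h
          · exact lt_of_not_ge h
        rw [hfIn y hy.1 hy.2, hfOut y' hy']
        have : moebius g y ≤ p₂ + t := by
          rcases eq_or_lt_of_le hy.2 with h | h
          · rw [h, hfix2]
          · rw [← hfix2]
            exact (hMmono y hy p₂ ⟨hp12.le, le_rfl⟩ h).le
        linarith
    · by_cases hy' : p₁ ≤ y' ∧ y' ≤ p₂
      · have hy2 : y < p₁ := by
          rcases not_and_or.1 hy with h | h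
          · exact lt_of_not_ge h
          · exact absurd (le_trans hlt.le hy'.2) h
        rw [hfOut y hy, hfIn y' hy'.1 hy'.2]
        have : p₁ + t ≤ moebius g y' := by
          rcases eq_or_lt_of_le hy'.1 with h | h
          · rw [← h, hfix1]
          · rw [← hfix1]
            exact (hMmono p₁ ⟨le_rfl, hp12.le⟩ y' hy' h).le
        linarith
      · rw [hfOut y hy, hfOut y' hy']
        linarith
  -- continuity of the Möbius part on the interval
  have hcont : ContinuousOn (fun y : ℝ => (a * y + b) / (c * y + d)) (Set.Icc p₁ p₂) := by
    apply ContinuousOn.div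
    · fun_prop
    · fun_prop
    · exact fun y hy => hden y hy
  have hMoF : Set.EqOn (moebius g) (fun y : ℝ => (a * y + b) / (c * y + d)) (Set.Icc p₁ p₂) :=
    fun y _ => hMo y
  have hsurj : Function.Surjective f := by
    intro z
    by_cases h1 : z < p₁ + t
    · refine ⟨z - t, ?_⟩
      rw [hfOut (z - t) (fun hmem => by linarith [hmem.1])]
      ring
    · by_cases h2 : p₂ + t < z
      · refine ⟨z - t, ?_⟩
        rw [hfOut (z - t) (fun hmem => by linarith [hmem.2])]
        ring
      · push_neg at h1 h2
        have hzmem : z ∈ Set.Icc ((fun y : ℝ => (a * y + b) / (c * y + d)) p₁)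
            ((fun y : ℝ => (a * y + b) / (c * y + d)) p₂) := by
          simp only
          rw [← hMo p₁, ← hMo p₂, hfix1, hfix2]
          exact ⟨h1, h2⟩
        obtain ⟨y, hyIcc, hyz⟩ := intermediate_value_Icc hp12.le hcont hzmem
        refine ⟨y, ?_⟩
        rw [hfIn y hyIcc.1 hyIcc.2, hMo y]
        exact hyz
  set h : ℝ ≃ₜ ℝ := homeoOfMono f hmono hsurj with hh
  have happ : ∀ y : ℝ, h y = f y := fun y => rfl
  -- local pieces
  have hTdet : (1 : ℝ) * 1 - (t : ℝ) * 0 = 1 := by ring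
  set Tt : SL2 ℝ := mk2 1 (t : ℝ) 0 1 hTdet with hTt
  have hTtA : Tt ∈ entriesIn A := by
    rw [hTt]
    exact mk2_entriesIn hTdet ⟨A.one_mem, intCast_mem A t, A.zero_mem, A.one_mem⟩
  have hTtMo : ∀ y : ℝ, moebius Tt y = y + t := by
    intro y; rw [hTt, moebius_mk2]; field_simp; ring
  have pieceg : ∀ y₀ : ℝ, p₁ < y₀ → y₀ < p₂ → IsLocalPiece h g y₀ := by
    intro y₀ h1 h2
    refine ⟨by rw [hMd]; exact hden y₀ ⟨h1.le, h2.le⟩, ?_⟩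
    filter_upwards [Ioo_mem_nhds h1 h2] with y hy
    rw [happ y, hfIn y hy.1.le hy.2.le]
  have pieceT_lt : ∀ y₀ : ℝ, y₀ < p₁ → IsLocalPiece h Tt y₀ := by
    intro y₀ h1
    refine ⟨by rw [hTt, mdenom_mk2]; norm_num, ?_⟩
    filter_upwards [Iio_mem_nhds h1] with y hy
    rw [happ y, hfOut y (fun hmem => by exact absurd hmem.1 (not_le.2 hy)), hTtMo]
  have pieceT_gt : ∀ y₀ : ℝ, p₂ < y₀ → IsLocalPiece h Tt y₀ := by
    intro y₀ h1
    refine ⟨by rw [hTt, mdenom_mk2]; norm_num, ?_⟩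
    filter_upwards [Ioi_mem_nhds h1] with y hy
    rw [happ y, hfOut y (fun hmem => by exact absurd hmem.2 (not_le.2 hy)), hTtMo]
  have hpieces : ∀ y₀ : ℝ, y₀ ≠ p₁ → y₀ ≠ p₂ → ∃ g' ∈ entriesIn A, IsLocalPiece h g' y₀ := by
    intro y₀ hne1 hne2
    rcases lt_trichotomy y₀ p₁ with h1 | h1 | h1
    · exact ⟨Tt, hTtA, pieceT_lt y₀ h1⟩
    · exact absurd h1 hne1
    · rcases lt_trichotomy y₀ p₂ with h2 | h2 | h2
      · exact ⟨g, hA, pieceg y₀ h1 h2⟩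
      · exact absurd h2 hne2
      · exact ⟨Tt, hTtA, pieceT_gt y₀ h2⟩
  -- the images of the breakpoints are also fixed points of hyperbolics
  have hTdet' : (1 : ℝ) * 1 - (-(t : ℝ)) * 0 = 1 := by ring
  have himgFix : ∀ p : ℝ, p ∈ FixHyp A → p + t ∈ FixHyp A := by
    intro p hp
    refine FixHyp.conj (g := mk2 1 (-(t : ℝ)) 0 1 hTdet')
      (mk2_entriesIn hTdet' ⟨A.one_mem, A.neg_mem (intCast_mem A t), A.zero_mem, A.one_mem⟩)
      (by rw [mdenom_mk2]; norm_num) ?_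
    rw [moebius_mk2]
    have : (1 * (p + (t : ℝ)) + -(t : ℝ)) / (0 * (p + (t : ℝ)) + 1) = p := by
      field_simp
      ring
    rw [this]
    exact hp
  have hhp1 : h p₁ = p₁ + t := by rw [happ p₁, hfIn p₁ le_rfl hp12.le, hfix1]
  have hhp2 : h p₂ = p₂ + t := by rw [happ p₂, hfIn p₂ hp12.le le_rfl, hfix2]
  -- assemble
  refine ⟨h, mem_HGroup ⟨{p₁, p₂}, ?_⟩ ?_ ?_, ?_⟩
  · intro y₀ hy₀
    simp only [Finset.mem_insert, Finset.mem_singleton, not_or] at hy₀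
    exact hpieces y₀ hy₀.1 hy₀.2
  · intro y₀ hy₀
    exact hpieces y₀ (fun h' => hy₀ (h' ▸ hp₁Fix)) (fun h' => hy₀ (h' ▸ hp₂Fix))
  · intro z hz
    set x₀ : ℝ := h.symm z with hx₀
    have hhx₀ : h x₀ = z := h.apply_symm_apply z
    have hne1 : x₀ ≠ p₁ := by
      intro h'
      rw [h', hhp1] at hhx₀
      exact hz (hhx₀ ▸ himgFix p₁ hp₁Fix)
    have hne2 : x₀ ≠ p₂ := by
      intro h'
      rw [h', hhp2] at hhx₀
      exact hz (hhx₀ ▸ himgFix p₂ hp₂Fix)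
    obtain ⟨g', hg'A, hg'⟩ := hpieces x₀ hne1 hne2
    refine ⟨g'⁻¹, inv_entriesIn hg'A, ?_⟩
    have := hg'.inv
    rwa [hhx₀] at this
  · filter_upwards [Ioo_mem_nhds hx1 hx2] with y hy
    rw [happ y, hfIn y hy.1.le hy.2.le]


end PP

namespace PP

lemma moebius_neg (g : SL2 ℝ) (y : ℝ) : moebius (-g) y = moebius g y := by
  rw [moebius_eq, moebius_eq]
  have h1 : ((-g : SL2 ℝ) : Matrix (Fin 2) (Fin 2) ℝ) = -(g : Matrix (Fin 2) (Fin 2) ℝ) := rfl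
  rw [h1]
  simp only [Matrix.neg_apply]
  rw [show -(g.1 0 0) * y + -(g.1 0 1) = -(g.1 0 0 * y + g.1 0 1) by ring,
    show -(g.1 1 0) * y + -(g.1 1 1) = -(g.1 1 0 * y + g.1 1 1) by ring]
  exact neg_div_neg_eq _ _

lemma mdenom_neg (g : SL2 ℝ) (y : ℝ) : mdenom (-g) y = -(mdenom g y) := by
  rw [mdenom_eq, mdenom_eq]
  have h1 : ((-g : SL2 ℝ) : Matrix (Fin 2) (Fin 2) ℝ) = -(g : Matrix (Fin 2) (Fin 2) ℝ) := rfl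
  rw [h1]
  simp only [Matrix.neg_apply]
  ring

lemma neg_entriesIn {A : Subring ℝ} {g : SL2 ℝ} (hA : g ∈ entriesIn A) : -g ∈ entriesIn A := by
  intro i j
  have h1 : ((-g : SL2 ℝ) : Matrix (Fin 2) (Fin 2) ℝ) = -(g : Matrix (Fin 2) (Fin 2) ℝ) := rfl
  rw [h1, Matrix.neg_apply]
  exact A.neg_mem (hA i j)

set_option maxHeartbeats 1000000 in
lemma key_affine (g : SL2 ℝ) (hc : g.1 1 0 = 0) (x : ℝ) (hx : mdenom g x ≠ 0)
    (A : Subring ℝ) (hA : g ∈ entriesIn A) :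
    ∃ h : ℝ ≃ₜ ℝ, h ∈ HGroup A ∧ ∀ᶠ y in 𝓝 x, h y = moebius g y := by
  set a := g.1 0 0 with ha
  set b := g.1 0 1 with hb
  set d := g.1 1 1 with hd0
  have hdet : a * d - b * g.1 1 0 = 1 := by rw [ha, hb, hd0]; exact det_eq g
  have hMo : ∀ y : ℝ, moebius g y = (a * y + b) / d := by
    intro y; rw [moebius_eq, ← ha, ← hb, hc, ← hd0]; norm_num
  have hMd : ∀ y : ℝ, mdenom g y = d := by
    intro y; rw [mdenom_eq, hc, ← hd0]; ring
  have hd : d ≠ 0 := by rw [← hMd x]; exact hx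
  have had : a * d = 1 := by rw [hc] at hdet; linarith
  clear_value a b d
  have ha0 : a ≠ 0 := fun h => by rw [h] at had; norm_num at had
  have hq : 0 < a / d := by
    have e : a / d = a * a := by field_simp; linear_combination (-1 : ℝ) * had
    rw [e]
    rcases ha0.lt_or_gt with h | h <;> nlinarith
  set f : ℝ → ℝ := fun y => (a * y + b) / d with hf
  have hfy : ∀ y : ℝ, f y = (a * y + b) / d := fun y => by rw [hf]
  have hmono : StrictMono f := by
    intro y y' hlt
    have e : f y' - f y = (a / d) * (y' - y) := by rw [hfy, hfy]; field_simp; ring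
    nlinarith [e, hq]
  have hsurj : Function.Surjective f := by
    intro z
    refine ⟨(d * z - b) / a, ?_⟩
    rw [hfy]
    field_simp
    ring
  set h : ℝ ≃ₜ ℝ := homeoOfMono f hmono hsurj with hh
  have happ : ∀ y : ℝ, h y = f y := fun y => rfl
  have piece : ∀ y : ℝ, IsLocalPiece h g y := by
    intro y
    refine ⟨by rw [hMd]; exact hd, ?_⟩
    filter_upwards with y'
    rw [happ y', hfy y', hMo y']
  have hinv : LocallyIn A (FixHyp A) h⁻¹ := by
    intro z _
    refine ⟨g⁻¹, inv_entriesIn hA, ?_⟩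
    have := (piece (h.symm z)).inv
    rwa [h.apply_symm_apply] at this
  refine ⟨h, mem_HGroup ⟨∅, fun y _ => ⟨g, hA, piece y⟩⟩ (fun y _ => ⟨g, hA, piece y⟩) hinv, ?_⟩
  filter_upwards with y
  rw [happ y, hfy y, hMo y]

set_option maxHeartbeats 1000000 in
lemma key (g : SL2 ℝ) (x : ℝ) (hx : mdenom g x ≠ 0) (A : Subring ℝ) (hA : g ∈ entriesIn A) :
    ∃ h : ℝ ≃ₜ ℝ, h ∈ HGroup A ∧ ∀ᶠ y in 𝓝 x, h y = moebius g y := by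
  rcases lt_trichotomy (g.1 1 0) 0 with hc | hc | hc
  · have hc' : 0 < (-g : SL2 ℝ).1 1 0 := by
      have h1 : ((-g : SL2 ℝ) : Matrix (Fin 2) (Fin 2) ℝ) = -(g : Matrix (Fin 2) (Fin 2) ℝ) := rfl
      rw [h1, Matrix.neg_apply]
      linarith
    have hx' : mdenom (-g) x ≠ 0 := by rw [mdenom_neg]; exact neg_ne_zero.2 hx
    obtain ⟨h, hmem, hev⟩ := key_pos (-g) hc' x hx' A (neg_entriesIn hA)
    refine ⟨h, hmem, ?_⟩
    filter_upwards [hev] with y hy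
    rw [hy, moebius_neg]
  · exact key_affine g hc x hx A hA
  · exact key_pos g hc x hx A hA

end PP

/-- For every `g ∈ SL₂(ℝ)` and `x ∈ ℝ` with `g·x ≠ ∞`, there is a
piecewise-projective homeomorphism `h` of `ℝ` coinciding with (the projective action
of) `g` on a neighbourhood of `x`; moreover `h` can be taken in `H(A)` whenever
`A < ℝ` is a unital subring containing the coefficients of `g`. -/
theorem cut_and_paste (g : SL2 ℝ) (x : ℝ) (hx : mdenom g x ≠ 0) :
    (∃ h : ℝ ≃ₜ ℝ, IsPiecewiseIn Set.univ h ∧ ∀ᶠ y in 𝓝 x, h y = moebius g y) ∧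
    (∀ A : Subring ℝ, g ∈ entriesIn A →
      ∃ h : ℝ ≃ₜ ℝ, h ∈ HGroup A ∧ ∀ᶠ y in 𝓝 x, h y = moebius g y) := by
  constructor
  · obtain ⟨h, hmem, hev⟩ := key g x hx ⊤ (fun i j => Subring.mem_top _)
    obtain ⟨⟨B, hB⟩, -, -⟩ := hmem
    refine ⟨h, ⟨B, fun y hy => ?_⟩, hev⟩
    obtain ⟨g', -, hp⟩ := hB y hy
    exact ⟨g', trivial, hp⟩
  · exact fun A hA => key g x hx A hA
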